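/- arXiv:1003.5788 — 3 statements merged into one kernel-verified Lean document; each statement's English description precedes it below -/
import Mathlib

section
/- The Moyal product on Schwartz functions is associative: for all f, g, h ∈ 𝒮(ℝ^D, ℂ), (f ⋆ g) ⋆ h = f ⋆ (g ⋆ h). -/
open MeasureTheory

noncomputable section

/-- The standard symplectic matrix `Σ` on `ℝ^D`: block-diagonal with `D/2` blocks
`((0, -1), (1, 0))`. -/
def stdSigma (D : ℕ) : Matrix (Fin D) (Fin D) ℝ := fun i j =>
  if i.val % 2 = 1 ∧ i.val = j.val + 1 then 1
  else if j.val % 2 = 1 ∧ j.val = i.val + 1 then -1 else 0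

/-- `Θ = θ Σ`. -/
def Theta (θ : ℝ) (D : ℕ) : Matrix (Fin D) (Fin D) ℝ := θ • stdSigma D

/-- `y ∧ z = 2 yᵀ Θ⁻¹ z`. -/
def wedge (θ : ℝ) {D : ℕ} (y z : EuclideanSpace ℝ (Fin D)) : ℝ :=
  2 * ∑ i, ∑ j, y i * (Theta θ D)⁻¹ i j * z j

/-- The Moyal product `(f ⋆ g)(x) = (πθ)^{-D} ∬ f(x+y) g(x+z) e^{-i y∧z} dy dz`. -/
def moyal (θ : ℝ) {D : ℕ} (f g : EuclideanSpace ℝ (Fin D) → ℂ) :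
    EuclideanSpace ℝ (Fin D) → ℂ := fun x =>
  ((Real.pi * θ) ^ D)⁻¹ •
    ∫ p : EuclideanSpace ℝ (Fin D) × EuclideanSpace ℝ (Fin D),
      f (x + p.1) * g (x + p.2) * Complex.exp (-(Complex.I) * (wedge θ p.1 p.2 : ℂ))

namespace MoyalAux

variable {D : ℕ} {θ : ℝ}

lemma stdSigma_antisymm (D : ℕ) (i j : Fin D) : stdSigma D j i = - stdSigma D i j := by
  unfold stdSigma
  split_ifs <;> (try norm_num) <;> omega

lemma stdSigma_row_even {i : Fin D} (hD2 : D % 2 = 0) (hie : i.val % 2 = 0) (j : Fin D) :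
    stdSigma D i j = if j.val = i.val + 1 then -1 else 0 := by
  unfold stdSigma
  split_ifs <;> (try norm_num) <;> omega

lemma stdSigma_row_odd {i : Fin D} (hio : i.val % 2 = 1) (j : Fin D) :
    stdSigma D i j = if j.val + 1 = i.val then 1 else 0 := by
  unfold stdSigma
  split_ifs <;> (try norm_num) <;> omega

lemma stdSigma_sq (hD : Even D) (i k : Fin D) :
    ∑ j, stdSigma D i j * stdSigma D j k = if i = k then -1 else 0 := by
  have hD2 : D % 2 = 0 := Nat.even_iff.mp hD
  have hik : (i = k) ↔ (i.val = k.val) := ⟨fun h => by rw [h], fun h => Fin.ext h⟩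
  rcases Nat.even_or_odd i.val with he | ho
  · have hie : i.val % 2 = 0 := Nat.even_iff.mp he
    have hi1 : i.val + 1 < D := by have := i.isLt; omega
    rw [Finset.sum_congr rfl (fun j _ => by rw [stdSigma_row_even hD2 hie j])]
    rw [Finset.sum_eq_single (⟨i.val + 1, hi1⟩ : Fin D)]
    · have hv : (⟨i.val + 1, hi1⟩ : Fin D).val = i.val + 1 := rfl
      rw [if_pos hv]
      rw [stdSigma_row_odd (i := ⟨i.val + 1, hi1⟩) (by simp only [hv]; omega) k]
      simp only [hv, hik]
      split_ifs <;> (try norm_num) <;> omega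
    · intro j _ hj
      have hjv : j.val ≠ i.val + 1 := fun hc => hj (Fin.ext hc)
      rw [if_neg hjv, zero_mul]
    · intro hmem; exact absurd (Finset.mem_univ _) hmem
  · have hio : i.val % 2 = 1 := Nat.odd_iff.mp ho
    have hi1 : i.val - 1 < D := by have := i.isLt; omega
    rw [Finset.sum_congr rfl (fun j _ => by rw [stdSigma_row_odd hio j])]
    rw [Finset.sum_eq_single (⟨i.val - 1, hi1⟩ : Fin D)]
    · have hv : (⟨i.val - 1, hi1⟩ : Fin D).val = i.val - 1 := rfl
      rw [if_pos (by rw [hv]; omega), one_mul]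
      rw [stdSigma_row_even (i := ⟨i.val - 1, hi1⟩) hD2 (by simp only [hv]; omega) k]
      simp only [hv, hik]
      split_ifs <;> (try norm_num) <;> omega
    · intro j _ hj
      have hjv : ¬ (j.val + 1 = i.val) := by
        intro hc; exact hj (Fin.ext (show j.val = i.val - 1 by omega))
      rw [if_neg hjv, zero_mul]
    · intro hmem; exact absurd (Finset.mem_univ _) hmem


def Jmap (D : ℕ) (y : EuclideanSpace ℝ (Fin D)) : EuclideanSpace ℝ (Fin D) :=
  WithLp.toLp 2 (fun i => ∑ j, stdSigma D i j * y j)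

lemma Jmap_apply (y : EuclideanSpace ℝ (Fin D)) (i : Fin D) :
    Jmap D y i = ∑ j, stdSigma D i j * y j := rfl

lemma real_inner_eq (y z : EuclideanSpace ℝ (Fin D)) :
    (inner ℝ y z : ℝ) = ∑ i, y i * z i := by
  simp [PiLp.inner_apply, RCLike.inner_apply, starRingEnd_apply, mul_comm]

lemma inner_Jmap (y z : EuclideanSpace ℝ (Fin D)) :
    (inner ℝ (Jmap D y) z : ℝ) = - (inner ℝ y (Jmap D z) : ℝ) := by
  simp only [real_inner_eq, Jmap_apply, Finset.sum_mul, Finset.mul_sum]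
  rw [Finset.sum_comm, ← Finset.sum_neg_distrib]
  refine Finset.sum_congr rfl fun j _ => ?_
  rw [← Finset.sum_neg_distrib]
  refine Finset.sum_congr rfl fun i _ => ?_
  rw [stdSigma_antisymm D j i]
  ring

lemma Jmap_Jmap (hD : Even D) (y : EuclideanSpace ℝ (Fin D)) :
    Jmap D (Jmap D y) = - y := by
  ext i
  have : Jmap D (Jmap D y) i = ∑ j, ∑ k, stdSigma D i j * (stdSigma D j k * y k) := by
    simp only [Jmap_apply, Finset.mul_sum]
  rw [this]
  rw [Finset.sum_comm]
  have : ∀ k : Fin D, ∑ j, stdSigma D i j * (stdSigma D j k * y k)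
      = (if i = k then (-1:ℝ) else 0) * y k := by
    intro k
    simp only [← mul_assoc]
    rw [← Finset.sum_mul]
    congr 1
    exact stdSigma_sq hD i k
  rw [Finset.sum_congr rfl fun k _ => this k]
  simp [Finset.sum_ite_eq, PiLp.neg_apply]

lemma inner_Jmap_Jmap (hD : Even D) (y z : EuclideanSpace ℝ (Fin D)) :
    (inner ℝ (Jmap D y) (Jmap D z) : ℝ) = inner ℝ y z := by
  rw [inner_Jmap, Jmap_Jmap hD]
  simp

lemma Jmap_add (y z : EuclideanSpace ℝ (Fin D)) :
    Jmap D (y + z) = Jmap D y + Jmap D z := by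
  ext i
  simp [Jmap_apply, PiLp.add_apply, mul_add, Finset.sum_add_distrib]

lemma Jmap_smul (c : ℝ) (y : EuclideanSpace ℝ (Fin D)) :
    Jmap D (c • y) = c • Jmap D y := by
  ext i
  simp [Jmap_apply, PiLp.smul_apply, Finset.mul_sum, smul_eq_mul]
  refine Finset.sum_congr rfl fun j _ => by ring

lemma Jmap_neg (y : EuclideanSpace ℝ (Fin D)) : Jmap D (-y) = - Jmap D y := by
  ext i
  simp [Jmap_apply, PiLp.neg_apply, Finset.sum_neg_distrib]

def Jli (hD : Even D) : EuclideanSpace ℝ (Fin D) ≃ₗᵢ[ℝ] EuclideanSpace ℝ (Fin D) :=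
  LinearIsometryEquiv.mk
    { toFun := Jmap D
      invFun := fun y => - Jmap D y
      map_add' := Jmap_add
      map_smul' := Jmap_smul
      left_inv := fun y => by simp [Jmap_Jmap hD]
      right_inv := fun y => by
        show Jmap D (- Jmap D y) = y
        rw [Jmap_neg, Jmap_Jmap hD, neg_neg] }
    (fun y => by
      show ‖Jmap D y‖ = ‖y‖
      rw [norm_eq_sqrt_real_inner (Jmap D y), norm_eq_sqrt_real_inner y,
        inner_Jmap_Jmap hD])

lemma stdSigma_mul_self (hD : Even D) : stdSigma D * stdSigma D = (-1 : Matrix (Fin D) (Fin D) ℝ) := by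
  ext i k
  rw [Matrix.mul_apply, stdSigma_sq hD]
  simp [Matrix.one_apply]
  split_ifs <;> norm_num

lemma Theta_inv (hθ : θ ≠ 0) (hD : Even D) :
    (Theta θ D)⁻¹ = (-θ⁻¹) • stdSigma D := by
  apply Matrix.inv_eq_right_inv
  rw [Theta, Matrix.smul_mul, Matrix.mul_smul, stdSigma_mul_self hD, smul_smul]
  rw [show θ * -θ⁻¹ = -1 by field_simp]
  simp

lemma wedge_eq' (hθ : θ ≠ 0) (hD : Even D) (y z : EuclideanSpace ℝ (Fin D)) :
    wedge θ y z = (inner ℝ ((2/θ) • Jmap D y) z : ℝ) := by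
  rw [wedge, Theta_inv hθ hD, real_inner_eq]
  simp only [Matrix.smul_apply, smul_eq_mul, PiLp.smul_apply, Jmap_apply, Finset.mul_sum,
    Finset.sum_mul]
  rw [Finset.sum_comm]
  refine Finset.sum_congr rfl fun j _ => ?_
  refine Finset.sum_congr rfl fun i _ => ?_
  rw [stdSigma_antisymm D i j, div_eq_mul_inv]
  ring

def Smap (θ : ℝ) (D : ℕ) (w : EuclideanSpace ℝ (Fin D)) : EuclideanSpace ℝ (Fin D) :=
  (Real.pi * θ) • (-(Jmap D w))

lemma norm_exp_I_real (r : ℝ) : ‖Complex.exp (-(Complex.I) * (r:ℂ))‖ = 1 := by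
  rw [show -(Complex.I) * (r:ℂ) = (↑(-r)) * Complex.I by push_cast; ring]
  exact Complex.norm_exp_ofReal_mul_I _

lemma norm_exp_I_real' (r : ℝ) : ‖Complex.exp (Complex.I * (r:ℂ))‖ = 1 := by
  rw [show Complex.I * (r:ℂ) = (↑r) * Complex.I by push_cast; ring]
  exact Complex.norm_exp_ofReal_mul_I _

open FourierTransform in
lemma integral_shift_exp (φ : EuclideanSpace ℝ (Fin D) → ℂ)
    (t x : EuclideanSpace ℝ (Fin D)) :
    ∫ z, φ (x + z) * Complex.exp (-(Complex.I) * ((inner ℝ t z : ℝ) : ℂ))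
      = Complex.exp (Complex.I * ((inner ℝ t x : ℝ) : ℂ)) *
        (𝓕 φ) ((2 * Real.pi)⁻¹ • t) := by
  have h1 : ∀ z : EuclideanSpace ℝ (Fin D),
      φ (x + z) * Complex.exp (-(Complex.I) * ((inner ℝ t z : ℝ) : ℂ))
      = φ (x + z) * Complex.exp (-(Complex.I) * ((inner ℝ t (x + z - x) : ℝ) : ℂ)) := by
    intro z
    simp [add_sub_cancel_left]
  rw [integral_congr_ae (Filter.Eventually.of_forall h1)]
  rw [integral_add_left_eq_self
    (fun u => φ u * Complex.exp (-(Complex.I) * ((inner ℝ t (u - x) : ℝ) : ℂ))) x]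
  have h2 : ∀ u : EuclideanSpace ℝ (Fin D),
      φ u * Complex.exp (-(Complex.I) * ((inner ℝ t (u - x) : ℝ) : ℂ))
      = (φ u * Complex.exp (-(Complex.I) * ((inner ℝ t u : ℝ) : ℂ))) *
          Complex.exp (Complex.I * ((inner ℝ t x : ℝ) : ℂ)) := by
    intro u
    rw [inner_sub_right, mul_assoc, ← Complex.exp_add]
    push_cast
    ring_nf
  rw [integral_congr_ae (Filter.Eventually.of_forall h2)]
  rw [integral_mul_const]
  rw [mul_comm]
  congr 1
  rw [Real.fourier_eq']
  refine integral_congr_ae (Filter.Eventually.of_forall fun v => ?_)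
  show φ v * Complex.exp (-(Complex.I) * ((inner ℝ t v : ℝ) : ℂ))
      = Complex.exp (((-2 * Real.pi * (inner ℝ v ((2 * Real.pi)⁻¹ • t) : ℝ) : ℝ) : ℂ) * Complex.I) •
          φ v
  have hpi : (2 : ℝ) * Real.pi ≠ 0 := by positivity
  rw [show -2 * Real.pi * (inner ℝ v ((2 * Real.pi)⁻¹ • t) : ℝ) = -(inner ℝ t v : ℝ) by
    rw [inner_smul_right, real_inner_comm]; field_simp]
  rw [smul_eq_mul]
  rw [show ((-(inner ℝ t v : ℝ) : ℝ) : ℂ) * Complex.I = -(Complex.I) * ((inner ℝ t v : ℝ) : ℂ) by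
    push_cast; ring]
  ring

open FourierTransform in
lemma moyal_right_expand (hθ : 0 < θ) (hD : Even D)
    (F : EuclideanSpace ℝ (Fin D) → ℂ) (hFi : Integrable F) (hFc : Continuous F)
    (h : SchwartzMap (EuclideanSpace ℝ (Fin D)) ℂ) (x : EuclideanSpace ℝ (Fin D)) :
    moyal θ F ⇑h x
      = ∫ w, F (x + Smap θ D w) *
          (Complex.exp (Complex.I * ((2 * Real.pi * (inner ℝ w x : ℝ) : ℝ) : ℂ)) *
            (𝓕 ⇑h) w) := by
  have hθ' : θ ≠ 0 := ne_of_gt hθ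
  have hπθ : (0:ℝ) < Real.pi * θ := mul_pos Real.pi_pos hθ
  have hJc : Continuous (Jmap D) := (Jli hD).continuous
  set Φ : (EuclideanSpace ℝ (Fin D)) × (EuclideanSpace ℝ (Fin D)) → ℂ :=
    fun p => F (x + p.1) * h (x + p.2) * Complex.exp (-(Complex.I) * (wedge θ p.1 p.2 : ℂ))
    with hΦ
  have hwc : Continuous fun p : (EuclideanSpace ℝ (Fin D)) × (EuclideanSpace ℝ (Fin D)) =>
      wedge θ p.1 p.2 := by
    have : ∀ p : (EuclideanSpace ℝ (Fin D)) × (EuclideanSpace ℝ (Fin D)),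
        wedge θ p.1 p.2 = (inner ℝ ((2/θ) • Jmap D p.1) p.2 : ℝ) := fun p =>
      wedge_eq' hθ' hD p.1 p.2
    rw [funext this]
    exact Continuous.inner ((hJc.comp continuous_fst).const_smul (2/θ)) continuous_snd
  have hΦc : Continuous Φ := by
    refine Continuous.mul (Continuous.mul ?_ ?_) ?_
    · exact hFc.comp (continuous_const.add continuous_fst)
    · exact h.continuous.comp (continuous_const.add continuous_snd)
    · exact Complex.continuous_exp.comp
        (continuous_const.mul (Complex.continuous_ofReal.comp hwc))
  have hΦi : Integrable Φ := by
    have hb : Integrable (fun p : (EuclideanSpace ℝ (Fin D)) × (EuclideanSpace ℝ (Fin D)) =>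
        ‖F (x + p.1)‖ * ‖h (x + p.2)‖) :=
      (hFi.comp_add_left x).norm.mul_prod (h.integrable.comp_add_left x).norm
    refine hb.mono' hΦc.aestronglyMeasurable (Filter.Eventually.of_forall fun p => ?_)
    rw [hΦ]
    simp only [norm_mul, norm_exp_I_real, mul_one, le_refl]
  rw [moyal]
  have hvol : (volume : Measure ((EuclideanSpace ℝ (Fin D)) × (EuclideanSpace ℝ (Fin D))))
      = (volume : Measure (EuclideanSpace ℝ (Fin D))).prod volume := MeasureTheory.Measure.volume_eq_prod _ _
  have hΦi' : Integrable Φ ((volume : Measure (EuclideanSpace ℝ (Fin D))).prod volume) := by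
    rw [← hvol]; exact hΦi
  rw [show (∫ p : (EuclideanSpace ℝ (Fin D)) × (EuclideanSpace ℝ (Fin D)),
      F (x + p.1) * h (x + p.2) * Complex.exp (-(Complex.I) * (wedge θ p.1 p.2 : ℂ)))
      = ∫ p, Φ p ∂((volume : Measure (EuclideanSpace ℝ (Fin D))).prod volume) by
    rw [← hvol]]
  rw [MeasureTheory.integral_prod Φ hΦi']
  have inner_eq : ∀ y : EuclideanSpace ℝ (Fin D),
      (∫ z, Φ (y, z))
        = F (x + y) *
            (Complex.exp (Complex.I * ((inner ℝ ((2/θ) • Jmap D y) x : ℝ) : ℂ)) *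
              (𝓕 ⇑h) ((2 * Real.pi)⁻¹ • ((2/θ) • Jmap D y))) := by
    intro y
    have : ∀ z, Φ (y, z) = F (x + y) *
        ((⇑h) (x + z) *
          Complex.exp (-(Complex.I) * ((inner ℝ ((2/θ) • Jmap D y) z : ℝ) : ℂ))) := by
      intro z
      rw [hΦ]
      simp only []
      rw [wedge_eq' hθ' hD]
      ring
    rw [integral_congr_ae (Filter.Eventually.of_forall this)]
    rw [MeasureTheory.integral_const_mul]
    rw [integral_shift_exp (⇑h) ((2/θ) • Jmap D y) x]
  rw [integral_congr_ae (Filter.Eventually.of_forall inner_eq)]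
  -- now substitute y = (πθ) • w, then w = -(Jmap w')
  set G : EuclideanSpace ℝ (Fin D) → ℂ := fun y =>
    F (x + y) *
      (Complex.exp (Complex.I * ((inner ℝ ((2/θ) • Jmap D y) x : ℝ) : ℂ)) *
        (𝓕 ⇑h) ((2 * Real.pi)⁻¹ • ((2/θ) • Jmap D y))) with hG
  have sub1 : ∫ y, G y = ((Real.pi * θ) ^ D) • ∫ w, G ((Real.pi * θ) • w) := by
    rw [MeasureTheory.Measure.integral_comp_smul volume G (Real.pi * θ)]
    rw [finrank_euclideanSpace_fin]
    rw [abs_of_pos (by positivity), smul_smul]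
    rw [mul_inv_cancel₀ (by positivity), one_smul]
  rw [sub1]
  have e := (Jli hD).trans (LinearIsometryEquiv.neg ℝ)
  set em := ((Jli hD).trans (LinearIsometryEquiv.neg ℝ (E := EuclideanSpace ℝ (Fin D)))) with hem
  have hemap : ∀ w, em w = -(Jmap D w) := fun w => rfl
  have sub2 : (∫ w, G ((Real.pi * θ) • w))
      = ∫ w, G ((Real.pi * θ) • em w) := by
    rw [(em.measurePreserving).integral_comp
      em.toHomeomorph.toMeasurableEquiv.measurableEmbedding (fun w => G ((Real.pi * θ) • w))]
  rw [sub2]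
  have key : ∀ w : EuclideanSpace ℝ (Fin D),
      (2/θ) • Jmap D ((Real.pi * θ) • em w) = (2 * Real.pi) • w := by
    intro w
    rw [hemap w, Jmap_smul, Jmap_neg, Jmap_Jmap hD, neg_neg, smul_smul]
    rw [show (2/θ) * (Real.pi * θ) = 2 * Real.pi by field_simp]
  have final : ∀ w : EuclideanSpace ℝ (Fin D),
      G ((Real.pi * θ) • em w)
        = F (x + Smap θ D w) *
            (Complex.exp (Complex.I * ((2 * Real.pi * (inner ℝ w x : ℝ) : ℝ) : ℂ)) *
              (𝓕 ⇑h) w) := by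
    intro w
    rw [hG]
    simp only []
    rw [key w]
    rw [real_inner_smul_left, smul_smul, inv_mul_cancel₀ (by positivity), one_smul]
    rw [show (Real.pi * θ) • em w = Smap θ D w from by rw [hemap w, Smap]]
  rw [integral_congr_ae (Filter.Eventually.of_forall final)]
  rw [smul_smul, inv_mul_cancel₀ (by positivity), one_smul]

lemma wedge_flip (hθ : θ ≠ 0) (hD : Even D) (y z : EuclideanSpace ℝ (Fin D)) :
    wedge θ y z = (inner ℝ (-((2/θ) • Jmap D z)) y : ℝ) := by
  rw [wedge_eq' hθ hD, real_inner_smul_left, inner_Jmap, inner_neg_left, real_inner_smul_left,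
    real_inner_comm]
  ring

open FourierTransform in
lemma moyal_left_expand (hθ : 0 < θ) (hD : Even D)
    (f : SchwartzMap (EuclideanSpace ℝ (Fin D)) ℂ)
    (G : EuclideanSpace ℝ (Fin D) → ℂ) (hGi : Integrable G) (hGc : Continuous G)
    (x : EuclideanSpace ℝ (Fin D)) :
    moyal θ ⇑f G x
      = ∫ w, G (x - Smap θ D w) *
          (Complex.exp (Complex.I * ((2 * Real.pi * (inner ℝ w x : ℝ) : ℝ) : ℂ)) *
            (𝓕 ⇑f) w) := by
  have hθ' : θ ≠ 0 := ne_of_gt hθ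
  have hπθ : (0:ℝ) < Real.pi * θ := mul_pos Real.pi_pos hθ
  have hJc : Continuous (Jmap D) := (Jli hD).continuous
  set Φ : (EuclideanSpace ℝ (Fin D)) × (EuclideanSpace ℝ (Fin D)) → ℂ :=
    fun p => f (x + p.1) * G (x + p.2) * Complex.exp (-(Complex.I) * (wedge θ p.1 p.2 : ℂ))
    with hΦ
  have hwc : Continuous fun p : (EuclideanSpace ℝ (Fin D)) × (EuclideanSpace ℝ (Fin D)) =>
      wedge θ p.1 p.2 := by
    have : ∀ p : (EuclideanSpace ℝ (Fin D)) × (EuclideanSpace ℝ (Fin D)),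
        wedge θ p.1 p.2 = (inner ℝ ((2/θ) • Jmap D p.1) p.2 : ℝ) := fun p =>
      wedge_eq' hθ' hD p.1 p.2
    rw [funext this]
    exact Continuous.inner ((hJc.comp continuous_fst).const_smul (2/θ)) continuous_snd
  have hΦc : Continuous Φ := by
    refine Continuous.mul (Continuous.mul ?_ ?_) ?_
    · exact f.continuous.comp (continuous_const.add continuous_fst)
    · exact hGc.comp (continuous_const.add continuous_snd)
    · exact Complex.continuous_exp.comp
        (continuous_const.mul (Complex.continuous_ofReal.comp hwc))
  have hΦi : Integrable Φ := by
    have hb : Integrable (fun p : (EuclideanSpace ℝ (Fin D)) × (EuclideanSpace ℝ (Fin D)) =>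
        ‖f (x + p.1)‖ * ‖G (x + p.2)‖) :=
      (f.integrable.comp_add_left x).norm.mul_prod (hGi.comp_add_left x).norm
    refine hb.mono' hΦc.aestronglyMeasurable (Filter.Eventually.of_forall fun p => ?_)
    rw [hΦ]
    simp only [norm_mul, norm_exp_I_real, mul_one, le_refl]
  rw [moyal]
  have hvol : (volume : Measure ((EuclideanSpace ℝ (Fin D)) × (EuclideanSpace ℝ (Fin D))))
      = (volume : Measure (EuclideanSpace ℝ (Fin D))).prod volume :=
    MeasureTheory.Measure.volume_eq_prod _ _
  have hΦi' : Integrable Φ ((volume : Measure (EuclideanSpace ℝ (Fin D))).prod volume) := by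
    rw [← hvol]; exact hΦi
  rw [show (∫ p : (EuclideanSpace ℝ (Fin D)) × (EuclideanSpace ℝ (Fin D)),
      f (x + p.1) * G (x + p.2) * Complex.exp (-(Complex.I) * (wedge θ p.1 p.2 : ℂ)))
      = ∫ p, Φ p ∂((volume : Measure (EuclideanSpace ℝ (Fin D))).prod volume) by
    rw [← hvol]]
  rw [MeasureTheory.integral_prod_symm Φ hΦi']
  have inner_eq : ∀ z : EuclideanSpace ℝ (Fin D),
      (∫ y, Φ (y, z))
        = G (x + z) *
            (Complex.exp (Complex.I * ((inner ℝ (-((2/θ) • Jmap D z)) x : ℝ) : ℂ)) *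
              (𝓕 ⇑f) ((2 * Real.pi)⁻¹ • (-((2/θ) • Jmap D z)))) := by
    intro z
    have : ∀ y, Φ (y, z) = G (x + z) *
        ((⇑f) (x + y) *
          Complex.exp (-(Complex.I) * ((inner ℝ (-((2/θ) • Jmap D z)) y : ℝ) : ℂ))) := by
      intro y
      rw [hΦ]
      simp only []
      rw [wedge_flip hθ' hD]
      ring
    rw [integral_congr_ae (Filter.Eventually.of_forall this)]
    rw [MeasureTheory.integral_const_mul]
    rw [integral_shift_exp (⇑f) (-((2/θ) • Jmap D z)) x]
  rw [integral_congr_ae (Filter.Eventually.of_forall inner_eq)]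
  set G2 : EuclideanSpace ℝ (Fin D) → ℂ := fun z =>
    G (x + z) *
      (Complex.exp (Complex.I * ((inner ℝ (-((2/θ) • Jmap D z)) x : ℝ) : ℂ)) *
        (𝓕 ⇑f) ((2 * Real.pi)⁻¹ • (-((2/θ) • Jmap D z)))) with hG2
  have sub1 : ∫ z, G2 z = ((Real.pi * θ) ^ D) • ∫ w, G2 ((Real.pi * θ) • w) := by
    rw [MeasureTheory.Measure.integral_comp_smul volume G2 (Real.pi * θ)]
    rw [finrank_euclideanSpace_fin]
    rw [abs_of_pos (by positivity), smul_smul]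
    rw [mul_inv_cancel₀ (by positivity), one_smul]
  rw [sub1]
  set em := Jli hD with hem
  have hemap : ∀ w, em w = Jmap D w := fun w => rfl
  have sub2 : (∫ w, G2 ((Real.pi * θ) • w))
      = ∫ w, G2 ((Real.pi * θ) • em w) := by
    rw [(em.measurePreserving).integral_comp
      em.toHomeomorph.toMeasurableEquiv.measurableEmbedding (fun w => G2 ((Real.pi * θ) • w))]
  rw [sub2]
  have key : ∀ w : EuclideanSpace ℝ (Fin D),
      -((2/θ) • Jmap D ((Real.pi * θ) • em w)) = (2 * Real.pi) • w := by
    intro w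
    rw [hemap w, Jmap_smul, Jmap_Jmap hD, smul_neg, smul_neg, smul_smul]
    rw [show (2/θ) * (Real.pi * θ) = 2 * Real.pi by field_simp]
    rw [neg_neg]
  have final : ∀ w : EuclideanSpace ℝ (Fin D),
      G2 ((Real.pi * θ) • em w)
        = G (x - Smap θ D w) *
            (Complex.exp (Complex.I * ((2 * Real.pi * (inner ℝ w x : ℝ) : ℝ) : ℂ)) *
              (𝓕 ⇑f) w) := by
    intro w
    rw [hG2]
    simp only []
    rw [key w]
    rw [real_inner_smul_left, smul_smul, inv_mul_cancel₀ (by positivity), one_smul]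
    rw [show x + (Real.pi * θ) • em w = x - Smap θ D w from by
      rw [hemap w, Smap, smul_neg, sub_neg_eq_add]]
  rw [integral_congr_ae (Filter.Eventually.of_forall final)]
  rw [smul_smul, inv_mul_cancel₀ (by positivity), one_smul]

lemma smap_continuous (hD : Even D) : Continuous (Smap θ D) := by
  have hJc : Continuous (Jmap D) := (Jli hD).continuous
  exact (hJc.neg).const_smul (Real.pi * θ)

open FourierTransform in
lemma moyal_continuous (hθ : 0 < θ) (hD : Even D)
    (f g : SchwartzMap (EuclideanSpace ℝ (Fin D)) ℂ) :
    Continuous (moyal θ ⇑f ⇑g) := by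
  have hmf : moyal θ ⇑f ⇑g = fun x => ∫ w,
      (⇑f) (x + Smap θ D w) *
        (Complex.exp (Complex.I * ((2 * Real.pi * (inner ℝ w x : ℝ) : ℝ) : ℂ)) * (𝓕 ⇑g) w) :=
    funext fun x => moyal_right_expand hθ hD ⇑f f.integrable f.continuous g x
  rw [hmf]
  have hSc : Continuous (Smap θ D) := smap_continuous hD
  have h𝓕gi : Integrable (𝓕 ⇑g) := (SchwartzMap.fourierTransformCLM ℝ g).integrable
  have h𝓕gc : Continuous (𝓕 ⇑g) := (SchwartzMap.fourierTransformCLM ℝ g).continuous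
  refine continuous_of_dominated
    (bound := fun w => ((SchwartzMap.seminorm ℝ 0 0) f) * ‖(𝓕 ⇑g) w‖) ?_ ?_ ?_ ?_
  · intro x
    refine Continuous.aestronglyMeasurable ?_
    refine Continuous.mul (f.continuous.comp (continuous_const.add hSc)) ?_
    exact (Complex.continuous_exp.comp (continuous_const.mul
      (Complex.continuous_ofReal.comp ((continuous_const.mul
        (Continuous.inner continuous_id continuous_const)))))).mul h𝓕gc
  · intro x
    refine Filter.Eventually.of_forall fun w => ?_
    rw [norm_mul, norm_mul, norm_exp_I_real', one_mul]
    exact mul_le_mul_of_nonneg_right (SchwartzMap.norm_le_seminorm ℝ f _) (norm_nonneg _)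
  · exact (h𝓕gi.norm.const_mul _)
  · refine Filter.Eventually.of_forall fun w => ?_
    refine Continuous.mul (f.continuous.comp (continuous_id.add continuous_const)) ?_
    exact (Complex.continuous_exp.comp (continuous_const.mul
      (Complex.continuous_ofReal.comp (continuous_const.mul
        (Continuous.inner continuous_const continuous_id))))).mul continuous_const

open FourierTransform in
lemma moyal_integrable (hθ : 0 < θ) (hD : Even D)
    (f g : SchwartzMap (EuclideanSpace ℝ (Fin D)) ℂ) :
    Integrable (moyal θ ⇑f ⇑g) := by
  have hmf : moyal θ ⇑f ⇑g = fun x => ∫ w,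
      (⇑f) (x + Smap θ D w) *
        (Complex.exp (Complex.I * ((2 * Real.pi * (inner ℝ w x : ℝ) : ℝ) : ℂ)) * (𝓕 ⇑g) w) :=
    funext fun x => moyal_right_expand hθ hD ⇑f f.integrable f.continuous g x
  rw [hmf]
  have hSc : Continuous (Smap θ D) := smap_continuous hD
  have h𝓕gi : Integrable (𝓕 ⇑g) := (SchwartzMap.fourierTransformCLM ℝ g).integrable
  have h𝓕gc : Continuous (𝓕 ⇑g) := (SchwartzMap.fourierTransformCLM ℝ g).continuous
  set Ψ : (EuclideanSpace ℝ (Fin D)) × (EuclideanSpace ℝ (Fin D)) → ℂ := fun q =>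
    (⇑f) (q.1 + Smap θ D q.2) *
      (Complex.exp (Complex.I * ((2 * Real.pi * (inner ℝ q.2 q.1 : ℝ) : ℝ) : ℂ)) * (𝓕 ⇑g) q.2)
    with hΨ
  have hΨc : Continuous Ψ := by
    refine Continuous.mul (f.continuous.comp (continuous_fst.add (hSc.comp continuous_snd))) ?_
    exact (Complex.continuous_exp.comp (continuous_const.mul
      (Complex.continuous_ofReal.comp (continuous_const.mul
        (Continuous.inner continuous_snd continuous_fst))))).mul (h𝓕gc.comp continuous_snd)
  have hnorm : ∀ (x w : EuclideanSpace ℝ (Fin D)),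
      ‖Ψ (x, w)‖ = ‖(⇑f) (x + Smap θ D w)‖ * ‖(𝓕 ⇑g) w‖ := by
    intro x w
    rw [hΨ]
    simp only [norm_mul, norm_exp_I_real', one_mul]
  have hΨi : Integrable Ψ ((volume : Measure (EuclideanSpace ℝ (Fin D))).prod volume) := by
    rw [MeasureTheory.integrable_prod_iff' (by
      rw [← MeasureTheory.Measure.volume_eq_prod]
      exact hΨc.aestronglyMeasurable)]
    constructor
    · refine Filter.Eventually.of_forall fun w => ?_
      have hbi : Integrable (fun x : EuclideanSpace ℝ (Fin D) =>
          ‖(⇑f) (x + Smap θ D w)‖ * ‖(𝓕 ⇑g) w‖) :=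
        (f.integrable.comp_add_right (Smap θ D w)).norm.mul_const _
      refine hbi.mono' ?_ (Filter.Eventually.of_forall fun x => ?_)
      · exact (hΨc.comp (Continuous.prodMk_left w)).aestronglyMeasurable
      · rw [hnorm x w]
    · have hcalc : (fun w : EuclideanSpace ℝ (Fin D) => ∫ x, ‖Ψ (x, w)‖)
          = fun w => (∫ x : EuclideanSpace ℝ (Fin D), ‖f x‖) * ‖(𝓕 ⇑g) w‖ := by
        funext w
        rw [integral_congr_ae (Filter.Eventually.of_forall fun x => hnorm x w)]
        rw [MeasureTheory.integral_mul_const]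
        rw [integral_add_right_eq_self (fun x => ‖(⇑f) x‖) (Smap θ D w)]
      rw [hcalc]
      exact h𝓕gi.norm.const_mul _
  have := hΨi.integral_prod_left
  exact this

lemma exp_I_add (a b : ℝ) :
    Complex.exp (Complex.I * ((a + b : ℝ) : ℂ))
      = Complex.exp (Complex.I * (a:ℂ)) * Complex.exp (Complex.I * (b:ℂ)) := by
  rw [← Complex.exp_add]
  push_cast
  ring_nf

lemma inner_Smap_skew (v w : EuclideanSpace ℝ (Fin D)) :
    (inner ℝ w (Smap θ D v) : ℝ) = - (inner ℝ v (Smap θ D w) : ℝ) := by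
  rw [Smap, Smap, real_inner_smul_right, real_inner_smul_right, inner_neg_right,
    inner_neg_right]
  rw [show (inner ℝ w (Jmap D v) : ℝ) = - (inner ℝ v (Jmap D w) : ℝ) by
    rw [real_inner_comm, inner_Jmap, real_inner_comm]]
  ring

open FourierTransform in
theorem moyal_assoc' (hD : Even D) (hθ : 0 < θ)
    (f g h : SchwartzMap (EuclideanSpace ℝ (Fin D)) ℂ) :
    moyal θ (moyal θ (⇑f) (⇑g)) (⇑h) = moyal θ (⇑f) (moyal θ (⇑g) (⇑h)) := by
  funext x
  have hfgi := moyal_integrable hθ hD f g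
  have hfgc := moyal_continuous hθ hD f g
  have hghi := moyal_integrable hθ hD g h
  have hghc := moyal_continuous hθ hD g h
  have h𝓕fi : Integrable (𝓕 ⇑f) := (SchwartzMap.fourierTransformCLM ℝ f).integrable
  have h𝓕fc : Continuous (𝓕 ⇑f) := (SchwartzMap.fourierTransformCLM ℝ f).continuous
  have h𝓕hi : Integrable (𝓕 ⇑h) := (SchwartzMap.fourierTransformCLM ℝ h).integrable
  have h𝓕hc : Continuous (𝓕 ⇑h) := (SchwartzMap.fourierTransformCLM ℝ h).continuous
  have hSc : Continuous (Smap θ D) := smap_continuous hD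
  set K : EuclideanSpace ℝ (Fin D) → EuclideanSpace ℝ (Fin D) → ℂ := fun w v =>
    g (x + Smap θ D w - Smap θ D v) * ((𝓕 ⇑f) v * (𝓕 ⇑h) w) *
      Complex.exp (Complex.I *
        ((2 * Real.pi * (inner ℝ v x : ℝ) + 2 * Real.pi * (inner ℝ w x : ℝ)
          + 2 * Real.pi * (inner ℝ v (Smap θ D w) : ℝ) : ℝ) : ℂ)) with hK
  have hKint : Integrable (Function.uncurry K)
      ((volume : Measure (EuclideanSpace ℝ (Fin D))).prod volume) := by
    have hKc : Continuous (Function.uncurry K) := by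
      refine Continuous.mul (Continuous.mul ?_ ?_) ?_
      · exact g.continuous.comp
          ((continuous_const.add (hSc.comp continuous_fst)).sub (hSc.comp continuous_snd))
      · exact (h𝓕fc.comp continuous_snd).mul (h𝓕hc.comp continuous_fst)
      · refine Complex.continuous_exp.comp (continuous_const.mul
          (Complex.continuous_ofReal.comp ?_))
        refine Continuous.add (Continuous.add ?_ ?_) ?_
        · exact continuous_const.mul (Continuous.inner continuous_snd continuous_const)
        · exact continuous_const.mul (Continuous.inner continuous_fst continuous_const)
        · exact continuous_const.mul
            (Continuous.inner continuous_snd (hSc.comp continuous_fst))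
    have hb : Integrable (fun q : (EuclideanSpace ℝ (Fin D)) × (EuclideanSpace ℝ (Fin D)) =>
        ((SchwartzMap.seminorm ℝ 0 0) g : ℝ) * (‖(𝓕 ⇑h) q.1‖ * ‖(𝓕 ⇑f) q.2‖))
        ((volume : Measure (EuclideanSpace ℝ (Fin D))).prod volume) :=
      (h𝓕hi.norm.mul_prod h𝓕fi.norm).const_mul _
    refine hb.mono' (by
      rw [← MeasureTheory.Measure.volume_eq_prod]
      exact hKc.aestronglyMeasurable) (Filter.Eventually.of_forall fun q => ?_)
    rw [Function.uncurry, hK]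
    simp only [norm_mul, norm_exp_I_real', mul_one]
    rw [mul_comm (‖_‖ : ℝ) (‖_‖ : ℝ)]
    exact mul_le_mul_of_nonneg_right (SchwartzMap.norm_le_seminorm ℝ g _) (by positivity)
  rw [moyal_right_expand hθ hD (moyal θ ⇑f ⇑g) hfgi hfgc h x]
  rw [moyal_left_expand hθ hD f (moyal θ ⇑g ⇑h) hghi hghc x]
  have step1 : (∫ w, (moyal θ ⇑f ⇑g) (x + Smap θ D w) *
        (Complex.exp (Complex.I * ((2 * Real.pi * (inner ℝ w x : ℝ) : ℝ) : ℂ)) * (𝓕 ⇑h) w))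
      = ∫ w, ∫ v, K w v := by
    refine integral_congr_ae (Filter.Eventually.of_forall fun w => ?_)
    beta_reduce
    rw [moyal_left_expand hθ hD f ⇑g g.integrable g.continuous (x + Smap θ D w)]
    rw [← MeasureTheory.integral_mul_const]
    refine integral_congr_ae (Filter.Eventually.of_forall fun v => ?_)
    rw [hK]
    simp only []
    rw [show (2 * Real.pi * (inner ℝ v (x + Smap θ D w) : ℝ) : ℝ)
        = 2 * Real.pi * (inner ℝ v x : ℝ) + 2 * Real.pi * (inner ℝ v (Smap θ D w) : ℝ) by
      rw [inner_add_right]; ring]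
    rw [show (2 * Real.pi * (inner ℝ v x : ℝ) + 2 * Real.pi * (inner ℝ w x : ℝ)
          + 2 * Real.pi * (inner ℝ v (Smap θ D w) : ℝ) : ℝ)
        = (2 * Real.pi * (inner ℝ v x : ℝ) + 2 * Real.pi * (inner ℝ v (Smap θ D w) : ℝ))
          + 2 * Real.pi * (inner ℝ w x : ℝ) by ring]
    simp only [exp_I_add]
    ring
  have step3 : (∫ v, (moyal θ ⇑g ⇑h) (x - Smap θ D v) *
        (Complex.exp (Complex.I * ((2 * Real.pi * (inner ℝ v x : ℝ) : ℝ) : ℂ)) * (𝓕 ⇑f) v))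
      = ∫ v, ∫ w, K w v := by
    refine integral_congr_ae (Filter.Eventually.of_forall fun v => ?_)
    beta_reduce
    rw [moyal_right_expand hθ hD ⇑g g.integrable g.continuous h (x - Smap θ D v)]
    rw [← MeasureTheory.integral_mul_const]
    refine integral_congr_ae (Filter.Eventually.of_forall fun w => ?_)
    rw [hK]
    simp only []
    rw [show x - Smap θ D v + Smap θ D w = x + Smap θ D w - Smap θ D v by abel]
    rw [show (2 * Real.pi * (inner ℝ w (x - Smap θ D v) : ℝ) : ℝ)
        = 2 * Real.pi * (inner ℝ w x : ℝ) + 2 * Real.pi * (inner ℝ v (Smap θ D w) : ℝ) by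
      rw [inner_sub_right, inner_Smap_skew]; ring]
    rw [show (2 * Real.pi * (inner ℝ v x : ℝ) + 2 * Real.pi * (inner ℝ w x : ℝ)
          + 2 * Real.pi * (inner ℝ v (Smap θ D w) : ℝ) : ℝ)
        = (2 * Real.pi * (inner ℝ w x : ℝ) + 2 * Real.pi * (inner ℝ v (Smap θ D w) : ℝ))
          + 2 * Real.pi * (inner ℝ v x : ℝ) by ring]
    simp only [exp_I_add]
    ring
  rw [step1, step3]
  exact MeasureTheory.integral_integral_swap hKint

end MoyalAux

/-- the Moyal product on Schwartz functions is associative. -/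
theorem moyal_assoc (D : ℕ) (hD : 0 < D) (hDeven : Even D) (θ : ℝ) (hθ : 0 < θ)
    (f g h : SchwartzMap (EuclideanSpace ℝ (Fin D)) ℂ) :
    moyal θ (moyal θ (⇑f) (⇑g)) (⇑h) = moyal θ (⇑f) (moyal θ (⇑g) (⇑h)) := by
  exact MoyalAux.moyal_assoc' hDeven hθ f g h
end
end

section
/- The integral is a trace for the Moyal product: for all f, g ∈ 𝒮(ℝ^D, ℂ), the function x ↦ (f ⋆ g)(x) is integrable on ℝ^D and ∫_{ℝ^D} (f ⋆ g)(x) dx = ∫_{ℝ^D} f(x) g(x) dx. -/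
open MeasureTheory

noncomputable section

/-! ### Auxiliary algebra lemmas -/

lemma stdSigma_antisymm (D : ℕ) (i j : Fin D) : stdSigma D j i = - stdSigma D i j := by
  unfold stdSigma
  split_ifs <;> norm_num <;> first | omega | tauto

lemma stdSigma_mul_self {D : ℕ} (hD : Even D) : stdSigma D * stdSigma D = -1 := by
  have hD2 : D % 2 = 0 := Nat.even_iff.mp hD
  ext i k
  rw [Matrix.mul_apply, Matrix.neg_apply, Matrix.one_apply]
  rcases Nat.even_or_odd i.val with he | ho
  · have he' : i.val % 2 = 0 := Nat.even_iff.mp he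
    have hi1 : i.val + 1 < D := by have := i.isLt; omega
    rw [Finset.sum_eq_single ⟨i.val + 1, hi1⟩]
    · have hik : i = k ↔ (i:ℕ) = (k:ℕ) := Fin.ext_iff
      unfold stdSigma
      simp only [Fin.val_mk, hik]
      split_ifs <;> norm_num <;> first | omega | tauto
    · intro b _ hb
      have hb' : (b:ℕ) ≠ i.val + 1 := fun hh => hb (Fin.ext hh)
      unfold stdSigma
      split_ifs <;> norm_num <;> first | omega | tauto
    · intro h; exact absurd (Finset.mem_univ _) h
  · have ho' : i.val % 2 = 1 := Nat.odd_iff.mp ho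
    have hi0 : 0 < i.val := by omega
    have hi1 : i.val - 1 < D := by have := i.isLt; omega
    rw [Finset.sum_eq_single ⟨i.val - 1, hi1⟩]
    · have hik : i = k ↔ (i:ℕ) = (k:ℕ) := Fin.ext_iff
      unfold stdSigma
      simp only [Fin.val_mk, hik]
      split_ifs <;> norm_num <;> first | omega | tauto
    · intro b _ hb
      have hb' : (b:ℕ) ≠ i.val - 1 := fun hh => hb (Fin.ext hh)
      unfold stdSigma
      split_ifs <;> norm_num <;> first | omega | tauto
    · intro h; exact absurd (Finset.mem_univ _) h

variable {D : ℕ}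

/-- The linear map on `ℝ^D` given by the matrix `Σ`. -/
def Smap (D : ℕ) : EuclideanSpace ℝ (Fin D) →ₗ[ℝ] EuclideanSpace ℝ (Fin D) where
  toFun y := WithLp.toLp 2 (fun i => ∑ j, stdSigma D i j * y j)
  map_add' y z := by
    ext i
    show ∑ j, stdSigma D i j * (y j + z j)
        = (∑ j, stdSigma D i j * y j) + ∑ j, stdSigma D i j * z j
    rw [← Finset.sum_add_distrib]
    congr 1; ext j; ring
  map_smul' c y := by
    ext i
    show ∑ j, stdSigma D i j * (c * y j) = c * ∑ j, stdSigma D i j * y j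
    rw [Finset.mul_sum]
    congr 1; ext j; ring

lemma Smap_apply (y : EuclideanSpace ℝ (Fin D)) (i : Fin D) :
    Smap D y i = ∑ j, stdSigma D i j * y j := rfl

lemma Smap_Smap (hD : Even D) (y : EuclideanSpace ℝ (Fin D)) :
    Smap D (Smap D y) = -y := by
  ext i
  have h2 := stdSigma_mul_self hD
  have : ∀ i k : Fin D, ∑ j, stdSigma D i j * stdSigma D j k = -(if i = k then (1:ℝ) else 0) := by
    intro i k
    have := congrFun (congrFun h2 i) k
    rw [Matrix.mul_apply] at this
    simpa [Matrix.one_apply] using this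
  calc Smap D (Smap D y) i = ∑ j, stdSigma D i j * ∑ k, stdSigma D j k * y k := rfl
    _ = ∑ j, ∑ k, stdSigma D i j * stdSigma D j k * y k := by
        congr 1; ext j; rw [Finset.mul_sum]; congr 1; ext k; ring
    _ = ∑ k, (∑ j, stdSigma D i j * stdSigma D j k) * y k := by
        rw [Finset.sum_comm]; congr 1; ext k; rw [Finset.sum_mul]
    _ = ∑ k, -(if i = k then (1:ℝ) else 0) * y k := by
        congr 1; ext k; rw [this]
    _ = -y i := by simp

open RealInnerProductSpace in
lemma inner_euc (x y : EuclideanSpace ℝ (Fin D)) : ⟪x, y⟫ = ∑ i, x i * y i := by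
  simp [PiLp.inner_apply, RCLike.inner_apply, mul_comm]

open RealInnerProductSpace in
lemma inner_Smap_Smap (hD : Even D) (y z : EuclideanSpace ℝ (Fin D)) :
    ⟪Smap D y, Smap D z⟫ = ⟪y, z⟫ := by
  have key : ∀ j k : Fin D, ∑ i, stdSigma D i j * stdSigma D i k
      = (if j = k then (1:ℝ) else 0) := by
    intro j k
    have h2 := congrFun (congrFun (stdSigma_mul_self hD) j) k
    rw [Matrix.mul_apply] at h2
    have : ∑ i, stdSigma D i j * stdSigma D i k = ∑ i, -(stdSigma D j i * stdSigma D i k) := by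
      congr 1; ext i; rw [stdSigma_antisymm]; ring
    rw [this, Finset.sum_neg_distrib, h2]
    simp [Matrix.one_apply]
  rw [inner_euc, inner_euc]
  calc ∑ i, Smap D y i * Smap D z i
      = ∑ i, ∑ j, ∑ k, (stdSigma D i j * stdSigma D i k) * (y j * z k) := by
        congr 1; ext i
        rw [Smap_apply, Smap_apply, Finset.sum_mul_sum]
        congr 1; ext j; congr 1; ext k; ring
    _ = ∑ j, ∑ k, (∑ i, stdSigma D i j * stdSigma D i k) * (y j * z k) := by
        rw [Finset.sum_comm]
        congr 1; ext j
        rw [Finset.sum_comm]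
        congr 1; ext k
        rw [Finset.sum_mul]
    _ = ∑ j, y j * z j := by
        rw [Finset.sum_congr rfl]
        intro j _
        rw [Finset.sum_congr rfl (fun k _ => by rw [key j k])]
        simp
  
/-- `Σ` as a linear isometry equivalence (it is orthogonal). -/
def Siso (hD : Even D) : EuclideanSpace ℝ (Fin D) ≃ₗᵢ[ℝ] EuclideanSpace ℝ (Fin D) :=
  LinearEquiv.isometryOfInner
    { toLinearMap := Smap D
      invFun := fun y => -(Smap D y)
      left_inv := fun y => by simp [Smap_Smap hD y]
      right_inv := fun y => by
        show Smap D (-(Smap D y)) = y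
        rw [map_neg, Smap_Smap hD y, neg_neg] }
    (fun x y => inner_Smap_Smap hD x y)

lemma Siso_apply (hD : Even D) (y : EuclideanSpace ℝ (Fin D)) : Siso hD y = Smap D y := rfl

open RealInnerProductSpace in
lemma inner_Smap_self (y : EuclideanSpace ℝ (Fin D)) : ⟪Smap D y, y⟫ = 0 := by
  rw [inner_euc]
  have h : ∑ i, Smap D y i * y i = ∑ i, ∑ j, stdSigma D i j * (y j * y i) := by
    congr 1; ext i; rw [Smap_apply, Finset.sum_mul]; congr 1; ext j; ring
  have h2 : ∑ i, ∑ j, stdSigma D i j * (y j * y i)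
      = -∑ i, ∑ j, stdSigma D i j * (y j * y i) := by
    nth_rewrite 2 [Finset.sum_comm]
    rw [← Finset.sum_neg_distrib]
    congr 1; ext i
    rw [← Finset.sum_neg_distrib]
    congr 1; ext j
    rw [stdSigma_antisymm]; ring
  rw [h]
  linarith [h2]

lemma Theta_inv {θ : ℝ} (hθ : θ ≠ 0) (hD : Even D) :
    (Theta θ D)⁻¹ = (-θ⁻¹) • stdSigma D := by
  apply Matrix.inv_eq_right_inv
  rw [Theta, Matrix.smul_mul, Matrix.mul_smul, smul_smul, stdSigma_mul_self hD]
  rw [show θ * -θ⁻¹ = -1 by field_simp]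
  simp

open RealInnerProductSpace in
lemma wedge_eq {θ : ℝ} (hθ : θ ≠ 0) (hD : Even D) (y z : EuclideanSpace ℝ (Fin D)) :
    wedge θ y z = 2 * θ⁻¹ * ⟪Smap D y, z⟫ := by
  rw [wedge, Theta_inv hθ hD, inner_euc]
  simp_rw [Smap_apply, Finset.sum_mul, Matrix.smul_apply, smul_eq_mul, Finset.mul_sum]
  rw [Finset.sum_comm]
  apply Finset.sum_congr rfl; intro i _
  apply Finset.sum_congr rfl; intro j _
  rw [stdSigma_antisymm D i j]
  ring

section MainProof
open RealInnerProductSpace FourierTransform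

lemma phase_eq (hDe : Even D) {θ : ℝ} (hθ : 0 < θ) (y z : EuclideanSpace ℝ (Fin D)) :
    Complex.exp (-(Complex.I) * (wedge θ y z : ℂ))
      = (Real.fourierChar (-⟪z, (Real.pi * θ)⁻¹ • Siso hDe y⟫) : ℂ) := by
  rw [Real.fourierChar_apply, wedge_eq hθ.ne' hDe, real_inner_smul_right,
      real_inner_comm z, Siso_apply]
  have hπ : (Real.pi : ℂ) ≠ 0 := Complex.ofReal_ne_zero.mpr Real.pi_ne_zero
  have hθc : (θ : ℂ) ≠ 0 := Complex.ofReal_ne_zero.mpr hθ.ne'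
  congr 1
  push_cast
  field_simp

lemma wedge_cont (hDe : Even D) {θ : ℝ} (hθ : 0 < θ) :
    Continuous fun p : EuclideanSpace ℝ (Fin D) × EuclideanSpace ℝ (Fin D) =>
      wedge θ p.1 p.2 := by
  have hrw : (fun p : EuclideanSpace ℝ (Fin D) × EuclideanSpace ℝ (Fin D) =>
      wedge θ p.1 p.2) = fun p => 2 * θ⁻¹ * ⟪Siso hDe p.1, p.2⟫ := by
    funext p; exact wedge_eq hθ.ne' hDe _ _
  rw [hrw]
  exact continuous_const.mul (continuous_inner.comp
    (((Siso hDe).continuous.comp continuous_fst).prodMk continuous_snd))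

lemma integrand_integrable (hDe : Even D) {θ : ℝ} (hθ : 0 < θ)
    (f g : SchwartzMap (EuclideanSpace ℝ (Fin D)) ℂ) (x : EuclideanSpace ℝ (Fin D)) :
    Integrable (fun p : EuclideanSpace ℝ (Fin D) × EuclideanSpace ℝ (Fin D) =>
      f (x + p.1) * g (x + p.2) * Complex.exp (-(Complex.I) * (wedge θ p.1 p.2 : ℂ))) := by
  have hf1 : Integrable (fun y : EuclideanSpace ℝ (Fin D) => f (x + y)) :=
    f.integrable.comp_add_left x
  have hg1 : Integrable (fun z : EuclideanSpace ℝ (Fin D) => g (x + z)) :=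
    g.integrable.comp_add_left x
  have hbase : Integrable (fun p : EuclideanSpace ℝ (Fin D) × EuclideanSpace ℝ (Fin D) =>
      f (x + p.1) * g (x + p.2)) := by
    rw [Measure.volume_eq_prod]
    exact hf1.mul_prod hg1
  refine Integrable.mono' hbase.norm ?_ ?_
  · refine Continuous.aestronglyMeasurable ?_
    exact ((f.continuous.comp (continuous_const.add continuous_fst)).mul
      (g.continuous.comp (continuous_const.add continuous_snd))).mul
      (Complex.continuous_exp.comp
        (continuous_const.mul (Complex.continuous_ofReal.comp (wedge_cont hDe hθ))))
  · filter_upwards with p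
    rw [norm_mul]
    have h1 : ‖Complex.exp (-(Complex.I) * ((wedge θ p.1 p.2 : ℝ) : ℂ))‖ = 1 := by
      rw [show -(Complex.I) * ((wedge θ p.1 p.2 : ℝ) : ℂ)
          = ((-(wedge θ p.1 p.2) : ℝ) : ℂ) * Complex.I by push_cast; ring]
      simpa using Complex.norm_exp_ofReal_mul_I (-(wedge θ p.1 p.2))
    rw [h1, mul_one]

open RealInnerProductSpace FourierTransform in
lemma inner_xi_self (hDe : Even D) (c : ℝ) (y : EuclideanSpace ℝ (Fin D)) :
    ⟪y, c • Siso hDe y⟫ = 0 := by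
  rw [real_inner_smul_right, real_inner_comm, Siso_apply, inner_Smap_self, mul_zero]

open RealInnerProductSpace FourierTransform in
lemma zint (hDe : Even D) {θ : ℝ} (hθ : 0 < θ)
    (g : SchwartzMap (EuclideanSpace ℝ (Fin D)) ℂ) (x y : EuclideanSpace ℝ (Fin D)) :
    ∫ z, g (x + z) * Complex.exp (-(Complex.I) * (wedge θ y z : ℂ))
      = (Real.fourierChar ⟪x, (Real.pi * θ)⁻¹ • Siso hDe y⟫ : ℂ) *
          𝓕 (⇑g) ((Real.pi * θ)⁻¹ • Siso hDe y) := by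
  set ξ : EuclideanSpace ℝ (Fin D) := (Real.pi * θ)⁻¹ • Siso hDe y with hξ
  have step : ∀ z, g (x + z) * Complex.exp (-(Complex.I) * (wedge θ y z : ℂ))
      = (Real.fourierChar ⟪x, ξ⟫ : ℂ) *
          ((fun w => (Real.fourierChar (-⟪w, ξ⟫) : ℂ) * g w) (x + z)) := by
    intro z
    rw [phase_eq hDe hθ y z]
    show _ = (Real.fourierChar ⟪x, ξ⟫ : ℂ) *
        ((Real.fourierChar (-⟪x + z, ξ⟫) : ℂ) * g (x + z))
    rw [inner_add_left]
    simp only [Real.fourierChar_apply]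
    rw [show (Complex.exp (((2 * Real.pi * ⟪x, ξ⟫ : ℝ) : ℂ) * Complex.I)) *
        ((Complex.exp (((2 * Real.pi * (-(⟪x, ξ⟫ + ⟪z, ξ⟫)) : ℝ) : ℂ) * Complex.I)) * g (x + z))
        = (Complex.exp (((2 * Real.pi * ⟪x, ξ⟫ : ℝ) : ℂ) * Complex.I) *
            Complex.exp (((2 * Real.pi * (-(⟪x, ξ⟫ + ⟪z, ξ⟫)) : ℝ) : ℂ) * Complex.I)) * g (x + z)
      from by ring, ← Complex.exp_add]
    rw [mul_comm]
    congr 2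
    push_cast
    ring
  calc ∫ z, g (x + z) * Complex.exp (-(Complex.I) * (wedge θ y z : ℂ))
      = ∫ z, (Real.fourierChar ⟪x, ξ⟫ : ℂ) *
          ((fun w => (Real.fourierChar (-⟪w, ξ⟫) : ℂ) * g w) (x + z)) := by
        exact integral_congr_ae (Filter.Eventually.of_forall step)
    _ = (Real.fourierChar ⟪x, ξ⟫ : ℂ) *
          ∫ z, (fun w => (Real.fourierChar (-⟪w, ξ⟫) : ℂ) * g w) (x + z) :=
        integral_const_mul _ _
    _ = (Real.fourierChar ⟪x, ξ⟫ : ℂ) *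
          ∫ w, (Real.fourierChar (-⟪w, ξ⟫) : ℂ) * g w := by
        rw [integral_add_left_eq_self (fun w => (Real.fourierChar (-⟪w, ξ⟫) : ℂ) * g w) x]
    _ = (Real.fourierChar ⟪x, ξ⟫ : ℂ) * 𝓕 (⇑g) ξ := by
        rw [Real.fourier_eq]
        simp [Circle.smul_def]

open RealInnerProductSpace FourierTransform in
lemma xint (hDe : Even D) {θ : ℝ} (hθ : 0 < θ)
    (f : SchwartzMap (EuclideanSpace ℝ (Fin D)) ℂ) (y : EuclideanSpace ℝ (Fin D)) :
    ∫ x, f (x + y) * (Real.fourierChar ⟪x, (Real.pi * θ)⁻¹ • Siso hDe y⟫ : ℂ)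
      = 𝓕 (⇑f) (-((Real.pi * θ)⁻¹ • Siso hDe y)) := by
  set ξ : EuclideanSpace ℝ (Fin D) := (Real.pi * θ)⁻¹ • Siso hDe y with hξ
  have hyξ : ⟪y, ξ⟫ = 0 := inner_xi_self hDe _ y
  have step : ∀ x, f (x + y) * (Real.fourierChar ⟪x, ξ⟫ : ℂ)
      = (fun u => f u * (Real.fourierChar ⟪u, ξ⟫ : ℂ)) (x + y) := by
    intro x
    show _ = f (x + y) * (Real.fourierChar ⟪x + y, ξ⟫ : ℂ)
    rw [inner_add_left, hyξ, add_zero]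
  rw [integral_congr_ae (Filter.Eventually.of_forall step),
    integral_add_right_eq_self (fun u => f u * (Real.fourierChar ⟪u, ξ⟫ : ℂ)) y,
    Real.fourier_eq]
  simp only [Circle.smul_def, inner_neg_right, neg_neg]
  apply integral_congr_ae (Filter.Eventually.of_forall ?_)
  intro v
  rw [smul_eq_mul, mul_comm]


open RealInnerProductSpace FourierTransform in
lemma Fg_int (g : SchwartzMap (EuclideanSpace ℝ (Fin D)) ℂ) :
    Integrable (𝓕 (⇑g)) := by
  have : Integrable (⇑(SchwartzMap.fourierTransformCLM ℂ g)) volume :=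
    (SchwartzMap.fourierTransformCLM ℂ g).integrable
  rwa [SchwartzMap.fourierTransformCLM_apply, SchwartzMap.fourier_coe] at this

open RealInnerProductSpace FourierTransform in
lemma Fg_cont (g : SchwartzMap (EuclideanSpace ℝ (Fin D)) ℂ) :
    Continuous (𝓕 (⇑g)) := by
  have := (SchwartzMap.fourierTransformCLM ℂ g).continuous
  rwa [SchwartzMap.fourierTransformCLM_apply, SchwartzMap.fourier_coe] at this

open RealInnerProductSpace FourierTransform in
lemma norm_char (r : ℝ) : ‖(Real.fourierChar r : ℂ)‖ = 1 := by
  exact Circle.norm_coe _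

open RealInnerProductSpace FourierTransform in
lemma F_cont (hDe : Even D) {θ : ℝ} (hθ : 0 < θ)
    (f g : SchwartzMap (EuclideanSpace ℝ (Fin D)) ℂ) :
    Continuous (fun p : EuclideanSpace ℝ (Fin D) × EuclideanSpace ℝ (Fin D) =>
      f (p.1 + p.2) * ((Real.fourierChar ⟪p.1, (Real.pi * θ)⁻¹ • Siso hDe p.2⟫ : ℂ) *
        𝓕 (⇑g) ((Real.pi * θ)⁻¹ • Siso hDe p.2))) := by
  have hξc : Continuous fun y : EuclideanSpace ℝ (Fin D) => (Real.pi * θ)⁻¹ • Siso hDe y :=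
    by fun_prop
  have hr : Continuous fun p : EuclideanSpace ℝ (Fin D) × EuclideanSpace ℝ (Fin D) =>
      (⟪p.1, (Real.pi * θ)⁻¹ • Siso hDe p.2⟫ : ℝ) :=
    continuous_inner.comp (continuous_fst.prodMk (hξc.comp continuous_snd))
  have hchar : Continuous fun p : EuclideanSpace ℝ (Fin D) × EuclideanSpace ℝ (Fin D) =>
      (Real.fourierChar ⟪p.1, (Real.pi * θ)⁻¹ • Siso hDe p.2⟫ : ℂ) := by
    have : (fun p : EuclideanSpace ℝ (Fin D) × EuclideanSpace ℝ (Fin D) =>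
        (Real.fourierChar ⟪p.1, (Real.pi * θ)⁻¹ • Siso hDe p.2⟫ : ℂ))
        = fun p => Complex.exp
            (((2 * Real.pi * ⟪p.1, (Real.pi * θ)⁻¹ • Siso hDe p.2⟫ : ℝ) : ℂ) * Complex.I) := by
      funext p; exact Real.fourierChar_apply _
    rw [this]
    exact Complex.continuous_exp.comp
      ((Complex.continuous_ofReal.comp (continuous_const.mul hr)).mul continuous_const)
  exact (f.continuous.comp (continuous_fst.add continuous_snd)).mul
    (hchar.mul ((Fg_cont g).comp (hξc.comp continuous_snd)))

open RealInnerProductSpace FourierTransform in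
lemma F_integrable (hDe : Even D) {θ : ℝ} (hθ : 0 < θ)
    (f g : SchwartzMap (EuclideanSpace ℝ (Fin D)) ℂ) :
    Integrable (fun p : EuclideanSpace ℝ (Fin D) × EuclideanSpace ℝ (Fin D) =>
      f (p.1 + p.2) * ((Real.fourierChar ⟪p.1, (Real.pi * θ)⁻¹ • Siso hDe p.2⟫ : ℂ) *
        𝓕 (⇑g) ((Real.pi * θ)⁻¹ • Siso hDe p.2))) := by
  have hπθ : (0:ℝ) < Real.pi * θ := mul_pos Real.pi_pos hθ
  have hmeas := (F_cont hDe hθ f g).aestronglyMeasurable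
      (μ := (volume : Measure (EuclideanSpace ℝ (Fin D))).prod volume)
  rw [Measure.volume_eq_prod]
  refine (integrable_prod_iff' hmeas).mpr ⟨?_, ?_⟩
  · refine Filter.Eventually.of_forall (fun y => ?_)
    refine Integrable.mono'
      ((f.integrable.comp_add_right y).norm.mul_const
        (‖𝓕 (⇑g) ((Real.pi * θ)⁻¹ • Siso hDe y)‖)) ?_ ?_
    · apply Continuous.aestronglyMeasurable
      show Continuous fun x : EuclideanSpace ℝ (Fin D) =>
        f (x + y) * ((Real.fourierChar ⟪x, (Real.pi * θ)⁻¹ • Siso hDe y⟫ : ℂ) *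
          𝓕 (⇑g) ((Real.pi * θ)⁻¹ • Siso hDe y))
      have hr : Continuous fun x : EuclideanSpace ℝ (Fin D) =>
          (⟪x, (Real.pi * θ)⁻¹ • Siso hDe y⟫ : ℝ) :=
        continuous_inner.comp (continuous_id.prodMk continuous_const)
      have hchar : Continuous fun x : EuclideanSpace ℝ (Fin D) =>
          (Real.fourierChar ⟪x, (Real.pi * θ)⁻¹ • Siso hDe y⟫ : ℂ) := by
        have : (fun x : EuclideanSpace ℝ (Fin D) =>
            (Real.fourierChar ⟪x, (Real.pi * θ)⁻¹ • Siso hDe y⟫ : ℂ))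
            = fun x => Complex.exp
                (((2 * Real.pi * ⟪x, (Real.pi * θ)⁻¹ • Siso hDe y⟫ : ℝ) : ℂ) * Complex.I) := by
          funext x; exact Real.fourierChar_apply _
        rw [this]
        exact Complex.continuous_exp.comp
          ((Complex.continuous_ofReal.comp (continuous_const.mul hr)).mul continuous_const)
      exact (f.continuous.comp (continuous_id.add continuous_const)).mul
        (hchar.mul continuous_const)
    · filter_upwards with x
      rw [norm_mul, norm_mul, norm_char, one_mul]
  · have heq : (fun y => ∫ x, ‖f (x + y) *
        ((Real.fourierChar ⟪x, (Real.pi * θ)⁻¹ • Siso hDe y⟫ : ℂ) *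
          𝓕 (⇑g) ((Real.pi * θ)⁻¹ • Siso hDe y))‖)
        = fun y => (∫ x : EuclideanSpace ℝ (Fin D), ‖f x‖) *
            ‖𝓕 (⇑g) ((Real.pi * θ)⁻¹ • Siso hDe y)‖ := by
      funext y
      calc ∫ x, ‖f (x + y) * ((Real.fourierChar ⟪x, (Real.pi * θ)⁻¹ • Siso hDe y⟫ : ℂ) *
              𝓕 (⇑g) ((Real.pi * θ)⁻¹ • Siso hDe y))‖
          = ∫ x, ‖f (x + y)‖ * ‖𝓕 (⇑g) ((Real.pi * θ)⁻¹ • Siso hDe y)‖ := by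
            apply integral_congr_ae (Filter.Eventually.of_forall ?_)
            intro x
            rw [norm_mul, norm_mul, norm_char, one_mul]
        _ = (∫ x, ‖f (x + y)‖) * ‖𝓕 (⇑g) ((Real.pi * θ)⁻¹ • Siso hDe y)‖ :=
            integral_mul_const _ _
        _ = (∫ x : EuclideanSpace ℝ (Fin D), ‖f x‖) *
              ‖𝓕 (⇑g) ((Real.pi * θ)⁻¹ • Siso hDe y)‖ := by
            rw [integral_add_right_eq_self (fun u => ‖f u‖) y]
    have h1 : Integrable fun η : EuclideanSpace ℝ (Fin D) =>
        ‖𝓕 (⇑g) ((Real.pi * θ)⁻¹ • η)‖ :=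
      (integrable_comp_smul_iff volume (fun η => ‖𝓕 (⇑g) η‖)
        (inv_ne_zero hπθ.ne')).mpr (Fg_int g).norm
    have h2 : Integrable fun y : EuclideanSpace ℝ (Fin D) =>
        ‖𝓕 (⇑g) ((Real.pi * θ)⁻¹ • Siso hDe y)‖ :=
      ((Siso hDe).measurePreserving.integrable_comp_emb
        (Siso hDe).toHomeomorph.measurableEmbedding).mpr h1
    exact (h2.const_mul _).congr
      (Filter.Eventually.of_forall fun y => (congrFun heq y).symm)

open RealInnerProductSpace FourierTransform in
lemma moyal_eq (hDe : Even D) {θ : ℝ} (hθ : 0 < θ)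
    (f g : SchwartzMap (EuclideanSpace ℝ (Fin D)) ℂ) :
    moyal θ (⇑f) (⇑g) = fun x => ((Real.pi * θ) ^ D)⁻¹ •
      ∫ y, f (x + y) * ((Real.fourierChar ⟪x, (Real.pi * θ)⁻¹ • Siso hDe y⟫ : ℂ) *
        𝓕 (⇑g) ((Real.pi * θ)⁻¹ • Siso hDe y)) := by
  funext x
  rw [moyal]
  congr 1
  rw [Measure.volume_eq_prod, integral_prod _
    (by rw [← Measure.volume_eq_prod]; exact integrand_integrable hDe hθ f g x)]
  apply integral_congr_ae (Filter.Eventually.of_forall ?_)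
  intro y
  calc ∫ z, f (x + y) * g (x + z) * Complex.exp (-(Complex.I) * (wedge θ y z : ℂ))
      = ∫ z, f (x + y) * (g (x + z) * Complex.exp (-(Complex.I) * (wedge θ y z : ℂ))) := by
        apply integral_congr_ae (Filter.Eventually.of_forall ?_)
        intro z; ring
    _ = f (x + y) * ∫ z, g (x + z) * Complex.exp (-(Complex.I) * (wedge θ y z : ℂ)) :=
        integral_const_mul _ _
    _ = _ := by rw [zint hDe hθ g x y]

open RealInnerProductSpace FourierTransform in
lemma parseval_aux (f g : SchwartzMap (EuclideanSpace ℝ (Fin D)) ℂ) :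
    ∫ η : EuclideanSpace ℝ (Fin D),
        𝓕 (⇑f) (-η) * 𝓕 (⇑g) η
      = ∫ x, f x * g x := by
  have hfneg : Integrable (fun x : EuclideanSpace ℝ (Fin D) => f (-x)) := f.integrable.comp_neg
  have h1 : ∀ η : EuclideanSpace ℝ (Fin D), 𝓕 (⇑f) (-η)
      = VectorFourier.fourierIntegral Real.fourierChar volume
          (innerₗ (EuclideanSpace ℝ (Fin D))) (fun x => f (-x)) η := by
    intro η
    have h := Real.fourier_comp_linearIsometry
      (LinearIsometryEquiv.neg ℝ (E := EuclideanSpace ℝ (Fin D))) (⇑f) η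
    rw [show (-η) = LinearIsometryEquiv.neg ℝ η from rfl, ← h]; rfl
  have flip := VectorFourier.integral_fourierIntegral_smul_eq_flip
      (L := innerₗ (EuclideanSpace ℝ (Fin D))) Real.continuous_fourierChar continuous_inner
      hfneg (Fg_int g)
  calc ∫ η : EuclideanSpace ℝ (Fin D),
          𝓕 (⇑f) (-η) * 𝓕 (⇑g) η
      = ∫ η : EuclideanSpace ℝ (Fin D),
          (VectorFourier.fourierIntegral Real.fourierChar volume
            (innerₗ (EuclideanSpace ℝ (Fin D))) (fun x => f (-x)) η) •
            𝓕 (⇑g) η := by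
        apply integral_congr_ae (Filter.Eventually.of_forall ?_)
        intro η
        rw [h1 η, smul_eq_mul]
    _ = ∫ x, f (-x) • VectorFourier.fourierIntegral Real.fourierChar volume
          (innerₗ (EuclideanSpace ℝ (Fin D))).flip (𝓕 (⇑g)) x := flip
    _ = ∫ x, f (-x) * 𝓕 (𝓕 (⇑g)) (-(-x)) := by
        apply integral_congr_ae (Filter.Eventually.of_forall ?_)
        intro x
        rw [flip_innerₗ, smul_eq_mul, neg_neg]
        rfl
    _ = ∫ x, f x * 𝓕 (𝓕 (⇑g)) (-x) :=
        integral_neg_eq_self (fun x => f x * 𝓕 (𝓕 (⇑g)) (-x)) volume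
    _ = ∫ x, f x * g x := by
        apply integral_congr_ae (Filter.Eventually.of_forall ?_)
        intro x
        congr 1
        rw [← Real.fourierInv_eq_fourier_neg]
        exact congrFun (g.continuous.fourierInv_fourier_eq g.integrable (Fg_int g)) x

end MainProof

open RealInnerProductSpace FourierTransform

/-- the integral is a trace for the Moyal product:
`f ⋆ g` is integrable and `∫ (f ⋆ g) = ∫ f g`. -/
theorem moyal_integral_trace (D : ℕ) (hD : 0 < D) (hDeven : Even D) (θ : ℝ) (hθ : 0 < θ)
    (f g : SchwartzMap (EuclideanSpace ℝ (Fin D)) ℂ) :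
    Integrable (moyal θ (⇑f) (⇑g)) ∧
    ∫ x : EuclideanSpace ℝ (Fin D), moyal θ (⇑f) (⇑g) x
      = ∫ x : EuclideanSpace ℝ (Fin D), f x * g x := by
  have hπθ : (0:ℝ) < Real.pi * θ := mul_pos Real.pi_pos hθ
  have hFint := F_integrable hDeven hθ f g
  have hFint' : Integrable (fun p : EuclideanSpace ℝ (Fin D) × EuclideanSpace ℝ (Fin D) =>
      f (p.1 + p.2) * ((Real.fourierChar ⟪p.1, (Real.pi * θ)⁻¹ • Siso hDeven p.2⟫ : ℂ) *
        𝓕 (⇑g) ((Real.pi * θ)⁻¹ • Siso hDeven p.2)))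
      ((volume : Measure (EuclideanSpace ℝ (Fin D))).prod volume) := by
    rw [← Measure.volume_eq_prod]; exact hFint
  constructor
  · rw [moyal_eq hDeven hθ f g]
    exact (hFint'.integral_prod_left).smul (((Real.pi * θ) ^ D)⁻¹ : ℝ)
  · rw [moyal_eq hDeven hθ f g]
    calc ∫ x, ((Real.pi * θ) ^ D)⁻¹ •
            ∫ y, f (x + y) * ((Real.fourierChar ⟪x, (Real.pi * θ)⁻¹ • Siso hDeven y⟫ : ℂ) *
              𝓕 (⇑g) ((Real.pi * θ)⁻¹ • Siso hDeven y))
        = ((Real.pi * θ) ^ D)⁻¹ • ∫ x,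
            ∫ y, f (x + y) * ((Real.fourierChar ⟪x, (Real.pi * θ)⁻¹ • Siso hDeven y⟫ : ℂ) *
              𝓕 (⇑g) ((Real.pi * θ)⁻¹ • Siso hDeven y)) :=
          integral_smul _ _
      _ = ((Real.pi * θ) ^ D)⁻¹ • ∫ y,
            ∫ x, f (x + y) * ((Real.fourierChar ⟪x, (Real.pi * θ)⁻¹ • Siso hDeven y⟫ : ℂ) *
              𝓕 (⇑g) ((Real.pi * θ)⁻¹ • Siso hDeven y)) := by
          congr 1
          exact integral_integral_swap hFint'
      _ = ((Real.pi * θ) ^ D)⁻¹ • ∫ y,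
            𝓕 (⇑f) (-((Real.pi * θ)⁻¹ • Siso hDeven y)) *
              𝓕 (⇑g) ((Real.pi * θ)⁻¹ • Siso hDeven y) := by
          congr 1
          apply integral_congr_ae (Filter.Eventually.of_forall ?_)
          intro y
          calc ∫ x, f (x + y) * ((Real.fourierChar ⟪x, (Real.pi * θ)⁻¹ • Siso hDeven y⟫ : ℂ) *
                  𝓕 (⇑g) ((Real.pi * θ)⁻¹ • Siso hDeven y))
              = ∫ x, (f (x + y) * (Real.fourierChar ⟪x, (Real.pi * θ)⁻¹ • Siso hDeven y⟫ : ℂ)) *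
                  𝓕 (⇑g) ((Real.pi * θ)⁻¹ • Siso hDeven y) := by
                apply integral_congr_ae (Filter.Eventually.of_forall ?_)
                intro x; ring
            _ = (∫ x, f (x + y) * (Real.fourierChar ⟪x, (Real.pi * θ)⁻¹ • Siso hDeven y⟫ : ℂ)) *
                  𝓕 (⇑g) ((Real.pi * θ)⁻¹ • Siso hDeven y) :=
                integral_mul_const _ _
            _ = _ := by rw [xint hDeven hθ f y]
      _ = ((Real.pi * θ) ^ D)⁻¹ • ∫ y,
            (fun η => 𝓕 (⇑f) (-η) * 𝓕 (⇑g) η)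
              ((Real.pi * θ)⁻¹ • Siso hDeven y) := rfl
      _ = ((Real.pi * θ) ^ D)⁻¹ • ∫ y,
            (fun η => 𝓕 (⇑f) (-η) * 𝓕 (⇑g) η)
              ((Real.pi * θ)⁻¹ • y) := by
          congr 1
          exact (Siso hDeven).measurePreserving.integral_comp
            (Siso hDeven).toHomeomorph.measurableEmbedding
            (fun y => (fun η => 𝓕 (⇑f) (-η) * 𝓕 (⇑g) η)
              ((Real.pi * θ)⁻¹ • y))
      _ = ((Real.pi * θ) ^ D)⁻¹ • ((((Real.pi * θ)⁻¹) ^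
              (Module.finrank ℝ (EuclideanSpace ℝ (Fin D))))⁻¹ •
            ∫ η, 𝓕 (⇑f) (-η) * 𝓕 (⇑g) η) := by
          congr 1
          exact Measure.integral_comp_smul_of_nonneg volume
            (fun η => 𝓕 (⇑f) (-η) * 𝓕 (⇑g) η)
            ((Real.pi * θ)⁻¹) (hR := inv_nonneg.mpr hπθ.le)
      _ = ∫ η, 𝓕 (⇑f) (-η) * 𝓕 (⇑g) η := by
          rw [finrank_euclideanSpace_fin, smul_smul]
          rw [show ((Real.pi * θ) ^ D)⁻¹ * (((Real.pi * θ)⁻¹) ^ D)⁻¹ = 1 from by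
            rw [inv_pow, inv_inv]
            exact inv_mul_cancel₀ (pow_ne_zero _ hπθ.ne')]
          rw [one_smul]
      _ = ∫ x, f x * g x := parseval_aux f g


end
end

section
/- Let A be a D×D real matrix that is orthogonal (A Aᵀ = 1) and symplectic for Σ (Aᵀ Σ A = Σ). Then the block-diagonal matrix M = ((A, 0), (0, A)) belongs to Sp(ℝ^{2D}, ω) and commutes with Z_Ω, i.e. M Z_Ω M⁻¹ = Z_Ω for every real Ω; thus matrices in O(ℝ^D, 1) ∩ Sp(ℝ^D, Σ) leave Z_Ω invariant. -/
open Matrix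

noncomputable section

/-- The symplectic form `ω = ((0, Σ), (Σ, 0))` on the phase space `ℝ^{2D}`. -/
def omegaMat (D : ℕ) : Matrix (Fin D ⊕ Fin D) (Fin D ⊕ Fin D) ℝ :=
  Matrix.fromBlocks 0 (stdSigma D) (stdSigma D) 0

/-- `Z_Ω = ((0, (4Ω²/θ²)Σ), (Σ, 0))`. -/
def ZOmega (D : ℕ) (θ Ω : ℝ) : Matrix (Fin D ⊕ Fin D) (Fin D ⊕ Fin D) ℝ :=
  Matrix.fromBlocks 0 ((4 * Ω ^ 2 / θ ^ 2) • stdSigma D) (stdSigma D) 0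

/-- if `A` is orthogonal and symplectic for `Σ`, then
`M = ((A, 0), (0, A))` is in `Sp(ℝ^{2D}, ω)` and leaves `Z_Ω` invariant. -/
theorem orthogonal_symplectic_leaves_ZOmega_invariant (D : ℕ) (hD : 0 < D) (hDeven : Even D)
    (θ : ℝ) (hθ : 0 < θ) (Ω : ℝ) (A : Matrix (Fin D) (Fin D) ℝ)
    (hO : A * Aᵀ = 1) (hSp : Aᵀ * stdSigma D * A = stdSigma D) :
    (Matrix.fromBlocks A 0 0 A)ᵀ * omegaMat D * Matrix.fromBlocks A 0 0 A = omegaMat D ∧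
    Matrix.fromBlocks A 0 0 A * ZOmega D θ Ω * (Matrix.fromBlocks A 0 0 A)⁻¹
      = ZOmega D θ Ω := by
  have hO' : Aᵀ * A = 1 := mul_eq_one_comm.mp hO
  -- A Σ Aᵀ = Σ
  have hSp' : A * stdSigma D * Aᵀ = stdSigma D := by
    calc A * stdSigma D * Aᵀ = A * (Aᵀ * stdSigma D * A) * Aᵀ := by rw [hSp]
    _ = (A * Aᵀ) * stdSigma D * (A * Aᵀ) := by noncomm_ring
    _ = stdSigma D := by rw [hO]; simp
  have hinv : (Matrix.fromBlocks A 0 0 A)⁻¹ = Matrix.fromBlocks Aᵀ 0 0 Aᵀ := by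
    apply Matrix.inv_eq_right_inv
    rw [Matrix.fromBlocks_multiply]
    simp [hO, Matrix.fromBlocks_one]
  constructor
  · rw [omegaMat, Matrix.fromBlocks_transpose, Matrix.fromBlocks_multiply,
      Matrix.fromBlocks_multiply]
    simp [hSp, Matrix.mul_assoc]
  · rw [hinv, ZOmega, Matrix.fromBlocks_multiply, Matrix.fromBlocks_multiply]
    have : A * ((4 * Ω ^ 2 / θ ^ 2) • stdSigma D) * Aᵀ
        = (4 * Ω ^ 2 / θ ^ 2) • stdSigma D := by
      rw [Matrix.mul_smul, Matrix.smul_mul, hSp']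
    simp [hSp', Matrix.mul_assoc, Matrix.mul_smul, Matrix.smul_mul]
end
end
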